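/- Fix reals σ² > 0, G > 0, K > 0, η > 0, p > 0, p_b > 0, W > 0. Define, for reals τ, τ' ≥ 0 with 0 < max(τ, τ') < 1, R(τ, τ') := (1 − max(τ, τ')) · W · log₂(1 + Gη(τ·p·G + τ'·p_b·K) / ((1 − max(τ, τ'))·σ²)). Then for all 0 ≤ τ < τ' < 1 one has R(τ, τ') < R(τ', τ'); consequently any maximizer (τ*, τ'*) of R over the feasible set {(τ, τ') : τ, τ' ≥ 0, 0 < max(τ, τ') < 1} satisfies τ* ≥ τ'*. -/
import Mathlib


/-- For the throughput function R(τ,τ'), whenever 0 ≤ τ < τ' < 1 we have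
R(τ,τ') < R(τ',τ'); consequently any maximizer (τ*,τ'*) over the feasible set
satisfies τ* ≥ τ'*. -/
theorem stmt_0 (σ2 G K η p pb W : ℝ)
    (hσ2 : 0 < σ2) (hG : 0 < G) (hK : 0 < K) (hη : 0 < η)
    (hp : 0 < p) (hpb : 0 < pb) (hW : 0 < W)
    (R : ℝ → ℝ → ℝ)
    (hR : ∀ τ τ' : ℝ, R τ τ' =
      (1 - max τ τ') * W *
        Real.logb 2 (1 + G * η * (τ * p * G + τ' * pb * K) / ((1 - max τ τ') * σ2))) :
    (∀ τ τ' : ℝ, 0 ≤ τ → τ < τ' → τ' < 1 → R τ τ' < R τ' τ') ∧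
    (∀ τs τ's : ℝ, 0 ≤ τs → 0 ≤ τ's → 0 < max τs τ's → max τs τ's < 1 →
      (∀ τ τ' : ℝ, 0 ≤ τ → 0 ≤ τ' → 0 < max τ τ' → max τ τ' < 1 → R τ τ' ≤ R τs τ's) →
      τ's ≤ τs) := by
  have key : ∀ τ τ' : ℝ, 0 ≤ τ → τ < τ' → τ' < 1 → R τ τ' < R τ' τ' := by
    intro τ τ' hτ hlt h1
    rw [hR, hR, max_eq_right hlt.le, max_self]
    have hτ' : 0 < τ' := lt_of_le_of_lt hτ hlt
    have h1' : 0 < 1 - τ' := by linarith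
    have hden : 0 < (1 - τ') * σ2 := mul_pos h1' hσ2
    have harg1 : 0 < 1 + G * η * (τ * p * G + τ' * pb * K) / ((1 - τ') * σ2) := by
      have hn : 0 ≤ G * η * (τ * p * G + τ' * pb * K) := by positivity
      have := div_nonneg hn hden.le
      linarith
    have hnum : G * η * (τ * p * G + τ' * pb * K) < G * η * (τ' * p * G + τ' * pb * K) := by
      have hd : 0 < (τ' - τ) * (p * G * (G * η)) :=
        mul_pos (sub_pos.mpr hlt) (mul_pos (mul_pos hp hG) (mul_pos hG hη))
      nlinarith [hd]
    have hargs : 1 + G * η * (τ * p * G + τ' * pb * K) / ((1 - τ') * σ2)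
        < 1 + G * η * (τ' * p * G + τ' * pb * K) / ((1 - τ') * σ2) := by
      gcongr
    have hlog := Real.logb_lt_logb (by norm_num : (1:ℝ) < 2) harg1 hargs
    have hpre : 0 < (1 - τ') * W := mul_pos h1' hW
    exact mul_lt_mul_of_pos_left hlog hpre
  refine ⟨key, ?_⟩
  intro τs τ's hτs hτ's hmax0 hmax1 hopt
  by_contra h
  push_neg at h
  have h1 : τ's < 1 := lt_of_le_of_lt (le_max_right τs τ's) hmax1
  have hlt := key τs τ's hτs h h1
  have := hopt τ's τ's hτ's hτ's (by simp [max_self]; linarith) (by simp [max_self, h1])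
  linarith
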